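/- The SPH particle system ẍᵢ = −Σⱼ mⱼ (P(ρ̃ᵢ)/ρ̃ᵢ² + P(ρ̃ⱼ)/ρ̃ⱼ²) ∇W_h(xᵢ − xⱼ) conserves the total energy E = Σᵢ mᵢ (½‖ẋᵢ‖² + e(ρ̃ᵢ)), where e'(ρ) = P(ρ)/ρ², along any C² solution: dE/dt = 0. -/

import Mathlib

open MeasureTheory Finset
open scoped ENNReal NNReal RealInnerProductSpace

theorem stmt9 {d N : ℕ} (m : Fin N → ℝ) (hm : ∀ i, 0 < m i)
    (W : EuclideanSpace ℝ (Fin d) → ℝ)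
    (gradW : EuclideanSpace ℝ (Fin d) → EuclideanSpace ℝ (Fin d))
    (hWeven : ∀ z, W (-z) = W z)
    (hW : ∀ z, HasGradientAt W (gradW z) z)
    (e P : ℝ → ℝ) (he : ∀ r : ℝ, 0 < r → HasDerivAt e (P r / r ^ 2) r)
    (x v a : Fin N → ℝ → EuclideanSpace ℝ (Fin d))
    (hx : ∀ i t, HasDerivAt (x i) (v i t) t)
    (hv : ∀ i t, HasDerivAt (v i) (a i t) t)
    (ρ : Fin N → ℝ → ℝ) (hρ : ∀ i t, ρ i t = ∑ j, m j * W (x i t - x j t))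
    (hpos : ∀ i t, 0 < ρ i t)
    (heq : ∀ i t, a i t = -∑ j, m j •
      ((P (ρ i t) / (ρ i t) ^ 2 + P (ρ j t) / (ρ j t) ^ 2) •
        gradW (x i t - x j t))) :
    ∀ t : ℝ, HasDerivAt
      (fun s => ∑ i, m i * ((1 / 2) * ‖v i s‖ ^ 2 + e (ρ i s))) 0 t := by
  intro t
  -- gradW is odd
  have hodd : ∀ z, gradW (-z) = - gradW z := by
    intro z
    have h1 : HasFDerivAt W ((InnerProductSpace.toDual ℝ _) (gradW z)) z :=
      hasGradientAt_iff_hasFDerivAt.mp (hW z)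
    have h2 : HasFDerivAt W ((InnerProductSpace.toDual ℝ _) (gradW (-z))) (-z) :=
      hasGradientAt_iff_hasFDerivAt.mp (hW (-z))
    have hneg : HasFDerivAt (fun y : EuclideanSpace ℝ (Fin d) => -y)
        (-(ContinuousLinearMap.id ℝ _)) z := (hasFDerivAt_id z).neg
    have h3 := h2.comp z hneg
    have h4 : (fun y => W (-y)) = W := funext hWeven
    rw [Function.comp_def, h4] at h3
    have h5 := h1.unique h3
    have h6 : gradW z = - gradW (-z) := by
      apply ext_inner_right ℝ
      intro w
      have := ContinuousLinearMap.ext_iff.mp h5 w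
      simpa [inner_neg_left] using this
    rw [h6]; simp
  set c : Fin N → ℝ := fun i => P (ρ i t) / (ρ i t) ^ 2 with hc
  set g : Fin N → Fin N → EuclideanSpace ℝ (Fin d) :=
    fun i j => gradW (x i t - x j t) with hg
  -- derivative of density
  have hρ' : ∀ i, HasDerivAt (fun s => ρ i s)
      (∑ j, m j * ⟪g i j, v i t - v j t⟫) t := by
    intro i
    have hfe : (fun s => ρ i s) = fun s => ∑ j, m j * W (x i s - x j s) :=
      funext (hρ i)
    rw [hfe]
    apply HasDerivAt.fun_sum
    intro j _
    have hx' : HasDerivAt (fun s => x i s - x j s) (v i t - v j t) t :=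
      (hx i t).sub (hx j t)
    have hW' := (hasGradientAt_iff_hasFDerivAt.mp
      (hW (x i t - x j t))).comp_hasDerivAt t hx'
    simpa [InnerProductSpace.toDual_apply_apply] using hW'.const_mul (m j)
  -- derivative of kinetic part
  have hkin : ∀ i, HasDerivAt (fun s => ‖v i s‖ ^ 2)
      (2 * ⟪a i t, v i t⟫) t := by
    intro i
    have h1 := (hv i t).inner ℝ (hv i t)
    have h2 : (fun s => ⟪v i s, v i s⟫) = fun s => ‖v i s‖ ^ 2 := by
      funext s; rw [real_inner_self_eq_norm_sq]
    rw [h2] at h1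
    convert h1 using 1
    case e'_4 => rfl
    case e'_5 => rfl
    rw [real_inner_comm]; ring
  -- per-particle derivative
  have hterm : ∀ (i : Fin N), HasDerivAt
      (fun s => m i * ((1 / 2) * ‖v i s‖ ^ 2 + e (ρ i s)))
      (m i * (⟪a i t, v i t⟫ + c i * ∑ j, m j * ⟪g i j, v i t - v j t⟫)) t := by
    intro i
    have h1 := ((hkin i).const_mul ((1:ℝ)/2)).add
      (((he (ρ i t) (hpos i t)).comp t (hρ' i)).const_mul 1)
    have h2 := h1.const_mul (m i)
    convert h2 using 1
    case e'_4 => rfl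
    case e'_5 => rfl
    simp [hc]; ring
  have htot := HasDerivAt.fun_sum (fun i (_ : i ∈ Finset.univ) => hterm i)
  -- the derivative value is zero
  have hzero : ∑ i, m i * (⟪a i t, v i t⟫ + c i * ∑ j, m j * ⟪g i j, v i t - v j t⟫) = 0 := by
    have hav : ∀ i, ⟪a i t, v i t⟫ =
        -∑ j, m j * ((c i + c j) * ⟪g i j, v i t⟫) := by
      intro i
      rw [heq i t]
      simp only [inner_neg_left, sum_inner, real_inner_smul_left, hc, hg]
    set F : Fin N → Fin N → ℝ := fun i j =>
      (m i * m j) * (-(c j * ⟪g i j, v i t⟫) - c i * ⟪g i j, v j t⟫) with hF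
    have key : ∑ i, m i * (⟪a i t, v i t⟫ + c i * ∑ j, m j * ⟪g i j, v i t - v j t⟫)
        = ∑ i, ∑ j, F i j := by
      refine Finset.sum_congr rfl fun i _ => ?_
      rw [hav i]
      simp only [hF, inner_sub_right, Finset.mul_sum, ← Finset.sum_neg_distrib,
        ← Finset.sum_add_distrib]
      exact Finset.sum_congr rfl fun j _ => by ring
    have hgswap : ∀ i j : Fin N, g j i = - g i j := by
      intro i j
      have : x j t - x i t = -(x i t - x j t) := by abel
      rw [hg]
      simp only [this, hodd]
    have hswap : ∀ i j : Fin N, F j i = - F i j := by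
      intro i j
      rw [hF]
      simp only [hgswap i j, inner_neg_left]
      ring
    rw [key]
    have h1 : ∑ i, ∑ j, F i j = -∑ i, ∑ j, F i j := by
      calc ∑ i, ∑ j, F i j = ∑ j, ∑ i, F i j := Finset.sum_comm
        _ = ∑ j, ∑ i, -(F j i) := by
            refine Finset.sum_congr rfl fun j _ => Finset.sum_congr rfl fun i _ => ?_
            rw [hswap i j, neg_neg]
        _ = -∑ i, ∑ j, F i j := by
            simp [Finset.sum_neg_distrib]
    linarith
  rw [← hzero]
  exact htot
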